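/- If the statement perfect(ℕ^ℕ) holds (every nonmeager subset of Baire space has nonmeager intersection with some nowhere dense perfect subset, relative to that perfect set), then perfect(X) holds for every perfect Polish space X. -/

import Mathlib

set_option linter.unusedSectionVars false
set_option maxHeartbeats 1000000

open Set Metric Topology Filter

def PerfectProp (X : Type*) [TopologicalSpace X] : Prop :=
  ∀ A : Set X, ¬ IsMeagre A →
    ∃ P : Set X, IsNowhereDense P ∧ Perfect P ∧ P.Nonempty ∧
      ¬ IsMeagre ((↑) ⁻¹' A : Set P)

def CantorProp (X : Type*) [TopologicalSpace X] : Prop :=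
  ∀ A : Set X, ¬ IsMeagre A →
    ∃ C : Set X, IsNowhereDense C ∧ Nonempty (C ≃ₜ (ℕ → Bool)) ∧
      ¬ IsMeagre ((↑) ⁻¹' A : Set C)



section RelMeager
variable {α β : Type*} [TopologicalSpace α] [TopologicalSpace β] {f : α → β}

lemma nwd_image (hf : Topology.IsEmbedding f) (hd : DenseRange f) {s : Set α}
    (hs : IsNowhereDense s) : IsNowhereDense (f '' s) := by
  rw [IsNowhereDense, eq_empty_iff_forall_notMem]
  intro x hx
  obtain ⟨y, hyO, a, rfl⟩ := hd.inter_open_nonempty _ isOpen_interior ⟨x, hx⟩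
  have hU : IsOpen (f ⁻¹' interior (closure (f '' s))) := isOpen_interior.preimage hf.continuous
  have hsub : f ⁻¹' interior (closure (f '' s)) ⊆ closure s := by
    rw [hf.closure_eq_preimage_closure_image s]
    exact preimage_mono interior_subset
  have : a ∈ interior (closure s) := mem_interior.mpr ⟨_, hsub, hU, hyO⟩
  rw [hs] at this; exact this

lemma nwd_preimage (hf : Topology.IsEmbedding f) (hd : DenseRange f) {t : Set β}
    (ht : IsNowhereDense t) : IsNowhereDense (f ⁻¹' t) := by
  rw [IsNowhereDense, eq_empty_iff_forall_notMem]
  intro x hx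
  obtain ⟨O, hO, hOeq⟩ :=
    hf.toIsInducing.isOpen_iff.mp (isOpen_interior (s := closure (f ⁻¹' t)))
  have hfx : f x ∈ O := by rw [← mem_preimage, hOeq]; exact hx
  have hsub : O ∩ range f ⊆ closure t := by
    rintro - ⟨hyO, a, rfl⟩
    have ha : a ∈ f ⁻¹' O := hyO
    rw [hOeq] at ha
    exact hf.continuous.closure_preimage_subset t (interior_subset ha)
  have hO' : O ⊆ closure t := by
    calc O ⊆ closure (O ∩ range f) := hd.open_subset_closure_inter hO
    _ ⊆ closure (closure t) := closure_mono hsub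
    _ = closure t := closure_closure
  have : f x ∈ interior (closure t) := mem_interior.mpr ⟨O, hO', hO, hfx⟩
  rw [ht] at this; exact this

lemma meagre_preimage (hf : Topology.IsEmbedding f) (hd : DenseRange f) {t : Set β}
    (ht : IsMeagre t) : IsMeagre (f ⁻¹' t) := by
  rw [isMeagre_iff_countable_union_isNowhereDense] at ht ⊢
  obtain ⟨S, hS, hc, hsub⟩ := ht
  refine ⟨(f ⁻¹' ·) '' S, ?_, hc.image _, ?_⟩
  · rintro - ⟨u, huS, rfl⟩; exact nwd_preimage hf hd (hS _ huS)
  · intro x hx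
    obtain ⟨u, huS, hu⟩ := hsub hx
    exact ⟨f ⁻¹' u, ⟨u, huS, rfl⟩, hu⟩

lemma meagre_image (hf : Topology.IsEmbedding f) (hd : DenseRange f) {s : Set α}
    (hs : IsMeagre s) : IsMeagre (f '' s) := by
  rw [isMeagre_iff_countable_union_isNowhereDense] at hs ⊢
  obtain ⟨S, hS, hc, hsub⟩ := hs
  refine ⟨(f '' ·) '' S, ?_, hc.image _, ?_⟩
  · rintro - ⟨u, huS, rfl⟩; exact nwd_image hf hd (hS _ huS)
  · rintro - ⟨x, hx, rfl⟩
    obtain ⟨u, huS, hu⟩ := hsub hx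
    exact ⟨f '' u, ⟨u, huS, rfl⟩, ⟨x, hu, rfl⟩⟩

end RelMeager



section Split
variable {X : Type*} [MetricSpace X]

lemma punct_ball (hperf : Preperfect (univ : Set X)) (c : X) {δ : ℝ} (hδ : 0 < δ) :
    ∃ w, w ≠ c ∧ dist w c < δ := by
  obtain ⟨y, ⟨hy, -⟩, hyne⟩ := (accPt_iff_nhds (x := c) (C := univ)).mp (hperf c (mem_univ c)) (ball c δ)
    (ball_mem_nhds c hδ)
  exact ⟨y, hyne, mem_ball.mp hy⟩

lemma exists_infinite_disjoint_balls (hperf : Preperfect (univ : Set X)) {U : Set X}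
    (hU : IsOpen U) (hne : U.Nonempty) {ε : ℝ} (hε : 0 < ε) :
    ∃ (y : ℕ → X) (r : ℕ → ℝ),
      (∀ k, 0 < r k ∧ r k ≤ ε / 2 ∧ closure (ball (y k) (r k)) ⊆ U) ∧
      (∀ j k, j ≠ k → Disjoint (ball (y j) (r j)) (ball (y k) (r k))) := by
  obtain ⟨z, hz⟩ := hne
  obtain ⟨ρ₀, hρ₀, hball⟩ := Metric.isOpen_iff.mp hU z hz
  set ρ := min ρ₀ ε with hρdef
  have hρ : 0 < ρ := lt_min hρ₀ hε
  have hρε : ρ ≤ ε := min_le_right _ _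
  have hρρ₀ : ρ ≤ ρ₀ := min_le_left _ _
  obtain ⟨w₀, hw₀1, hw₀2⟩ := punct_ball hperf z (show (0:ℝ) < ρ/4 by linarith)
  have step : ∀ p : {p : X // p ≠ z ∧ dist p z < ρ/4},
      ∃ q : X, q ≠ z ∧ dist q z < dist p.1 z / 8 :=
    fun p => punct_ball hperf z (by have := dist_pos.mpr p.2.1; linarith)
  choose nxt hnxt1 hnxt2 using step
  let f : ℕ → {p : X // p ≠ z ∧ dist p z < ρ/4} := fun k =>
    Nat.rec ⟨w₀, hw₀1, hw₀2⟩
      (fun _ p => ⟨nxt p, hnxt1 p, by have h1 := hnxt2 p; have h2 := p.2.2; linarith⟩) k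
  have hstep : ∀ k, dist (f (k+1)).1 z < dist (f k).1 z / 8 := fun k => hnxt2 (f k)
  set d : ℕ → ℝ := fun k => dist (f k).1 z with hd
  have hdpos : ∀ k, 0 < d k := fun k => dist_pos.mpr (f k).2.1
  have hdρ : ∀ k, d k < ρ/4 := fun k => (f k).2.2
  have hmono : ∀ j k, j < k → d k < d j / 8 := by
    intro j k
    induction k with
    | zero => omega
    | succ m ihm =>
      intro hjk
      rcases Nat.lt_succ_iff_lt_or_eq.mp hjk with h | h
      · have h1 := hstep m
        have h2 := ihm h
        have h3 := hdpos j
        linarith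
      · rw [h]; exact hstep m
  refine ⟨fun k => (f k).1, fun k => d k / 4, fun k => ⟨by linarith [hdpos k], ?_, ?_⟩, ?_⟩
  · have := hdρ k; linarith
  · refine subset_trans closure_ball_subset_closedBall (subset_trans ?_ hball)
    intro x hx
    have h1 : dist x (f k).1 ≤ d k / 4 := mem_closedBall.mp hx
    have h2 : dist x z ≤ dist x (f k).1 + dist (f k).1 z := dist_triangle _ _ _
    have h3 := hdρ k
    have h4 := hdpos k
    exact mem_ball.mpr (by linarith)
  · have key : ∀ j k, j < k →
        Disjoint (ball (f j).1 (d j / 4)) (ball (f k).1 (d k / 4)) := by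
      intro j k hjk
      rw [Set.disjoint_left]
      intro x hxj hxk
      have h1 : dist x (f j).1 < d j / 4 := mem_ball.mp hxj
      have h2 : dist x (f k).1 < d k / 4 := mem_ball.mp hxk
      have h3 : d j ≤ dist (f j).1 x + dist x (f k).1 + dist (f k).1 z := by
        have := dist_triangle (f j).1 x z
        have := dist_triangle x (f k).1 z
        linarith
      rw [dist_comm] at h3
      have h4 := hmono j k hjk
      have h5 := hdpos j
      have h6 := hdpos k
      linarith
    intro j k hjk
    rcases lt_or_gt_of_ne hjk with h | h
    · exact key j k h
    · exact (key k j h).symm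


/-- Admissible balls. -/
def Adm (U : Set X) (ε : ℝ) (V : Set X) : Prop :=
  ∃ c ρ', V = ball c ρ' ∧ 0 < ρ' ∧ ρ' ≤ ε / 2 ∧ closure V ⊆ U

lemma adm_props {U : Set X} {ε : ℝ} {V : Set X} (h : Adm U ε V) (hε : 0 < ε) :
    IsOpen V ∧ V.Nonempty ∧ closure V ⊆ U ∧ Bornology.IsBounded V ∧ diam V ≤ ε := by
  obtain ⟨c, ρ', rfl, h1, h2, h3⟩ := h
  refine ⟨isOpen_ball, ⟨c, mem_ball_self h1⟩, h3, isBounded_ball, ?_⟩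
  calc diam (ball c ρ') ≤ 2 * ρ' := diam_ball h1.le
  _ ≤ ε := by linarith

lemma exists_adm_ball {U O : Set X} {ε : ℝ} (hε : 0 < ε) (hO : IsOpen O) (hUo : IsOpen U)
    (hone : (O ∩ U).Nonempty) : ∃ V, Adm U ε V ∧ V ⊆ O ∩ U := by
  obtain ⟨x, hx⟩ := hone
  obtain ⟨ρ', hρ', hb⟩ := Metric.isOpen_iff.mp (hO.inter hUo) x hx
  have hm : 0 < min (ρ'/2) (ε/2) := lt_min (by linarith) (by linarith)
  have hmlt : min (ρ'/2) (ε/2) < ρ' := lt_of_le_of_lt (min_le_left _ _) (by linarith)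
  refine ⟨ball x (min (ρ'/2) (ε/2)), ⟨x, _, rfl, hm, min_le_right _ _, ?_⟩, ?_⟩
  · exact closure_ball_subset_closedBall.trans
      ((closedBall_subset_ball hmlt).trans (hb.trans inter_subset_right))
  · exact (ball_subset_ball hmlt.le).trans hb

theorem split' [TopologicalSpace.SeparableSpace X] (hperf : Preperfect (univ : Set X))
    {U : Set X} (hU : IsOpen U) (hne : U.Nonempty) {ε : ℝ} (hε : 0 < ε) :
    ∃ V : ℕ → Set X, (∀ n, IsOpen (V n)) ∧ (∀ n, (V n).Nonempty) ∧
      (∀ n, closure (V n) ⊆ U) ∧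
      (∀ n, Bornology.IsBounded (V n) ∧ diam (V n) ≤ ε) ∧
      (∀ m n, m ≠ n → Disjoint (V m) (V n)) ∧
      U ⊆ closure (⋃ n, V n) := by
  classical
  obtain ⟨y, r, hyr, hdisj⟩ := exists_infinite_disjoint_balls hperf hU hne hε
  set B : ℕ → Set X := fun k => ball (y k) (r k) with hB
  have hBadm : ∀ k, Adm U ε (B k) := fun k => ⟨y k, r k, rfl, (hyr k).1, (hyr k).2.1, (hyr k).2.2⟩
  set 𝒮 : Set (Set (Set X)) :=
    {F | (∀ V ∈ F, Adm U ε V ∧ ∀ k, Disjoint V (B k)) ∧ F.Pairwise Disjoint} with h𝒮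
  obtain ⟨M, hM⟩ : ∃ M, Maximal (· ∈ 𝒮) M := by
    apply zorn_subset
    intro c hc hchain
    refine ⟨⋃₀ c, ⟨?_, ?_⟩, fun s hs => subset_sUnion_of_mem hs⟩
    · rintro V ⟨F, hFc, hVF⟩
      exact (hc hFc).1 V hVF
    · rintro V ⟨F, hFc, hVF⟩ W ⟨F', hF'c, hWF'⟩ hVW
      rcases hchain.total hFc hF'c with h | h
      · exact (hc hF'c).2 (h hVF) hWF' hVW
      · exact (hc hFc).2 hVF (h hWF') hVW
  have hMadm : ∀ V ∈ M, Adm U ε V ∧ ∀ k, Disjoint V (B k) := hM.1.1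
  -- density
  have hdense : ∀ O : Set X, IsOpen O → (O ∩ U).Nonempty →
      (O ∩ ((⋃ k, B k) ∪ ⋃₀ M)).Nonempty := by
    intro O hO hone
    by_contra hcon
    rw [not_nonempty_iff_eq_empty] at hcon
    have hOB : ∀ k, Disjoint O (B k) := by
      intro k
      rw [Set.disjoint_left]
      intro a haO haB
      exact absurd (show a ∈ O ∩ ((⋃ k, B k) ∪ ⋃₀ M) from
        ⟨haO, Or.inl (mem_iUnion.mpr ⟨k, haB⟩)⟩) (by rw [hcon]; exact notMem_empty a)
    have hOM : ∀ V ∈ M, Disjoint O V := by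
      intro V hV
      rw [Set.disjoint_left]
      intro a haO haV
      exact absurd (show a ∈ O ∩ ((⋃ k, B k) ∪ ⋃₀ M) from
        ⟨haO, Or.inr ⟨V, hV, haV⟩⟩) (by rw [hcon]; exact notMem_empty a)
    obtain ⟨b, hbadm, hbsub⟩ := exists_adm_ball (U := U) hε hO hU hone
    have hbne : b.Nonempty := (adm_props hbadm hε).2.1
    have hbM : b ∉ M := by
      intro hbM
      obtain ⟨x, hxb⟩ := hbne
      exact Set.disjoint_left.mp (hOM b hbM) (hbsub hxb).1 hxb
    have hnew : insert b M ∈ 𝒮 := by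
      constructor
      · rintro V hV
        rcases hV with rfl | hVM
        · exact ⟨hbadm, fun k => (hOB k).mono_left (hbsub.trans inter_subset_left)⟩
        · exact hMadm V hVM
      · intro V hV W hW hVW
        rcases hV with rfl | hVM
        · rcases hW with rfl | hWM
          · exact absurd rfl hVW
          · exact ((hOM W hWM).mono_left (hbsub.trans inter_subset_left))
        · rcases hW with rfl | hWM
          · exact ((hOM V hVM).mono_left (hbsub.trans inter_subset_left)).symm
          · exact hM.1.2 hVM hWM hVW
    have := hM.2 hnew (subset_insert b M)
    exact hbM (this (mem_insert b M))
  -- countability of M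
  have hMc : M.Countable := by
    haveI : Nonempty X := ⟨hne.some⟩
    obtain ⟨u, hu⟩ := TopologicalSpace.exists_dense_seq X
    have hsel : ∀ V : M, ∃ n, u n ∈ (V : Set X) := by
      rintro ⟨V, hV⟩
      obtain ⟨hVo, hVne, -⟩ := adm_props (hMadm V hV).1 hε
      exact hu.exists_mem_open hVo hVne
    choose φ hφ using hsel
    have hinj : Function.Injective φ := by
      rintro ⟨V, hV⟩ ⟨W, hW⟩ hVW
      by_contra hne'
      have hd : Disjoint V W := hM.1.2 hV hW (by simpa using fun h => hne' (Subtype.ext h))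
      exact Set.disjoint_left.mp hd (hφ ⟨V, hV⟩) (by rw [hVW]; exact hφ ⟨W, hW⟩)
    have : Countable M := ⟨⟨φ, hinj⟩⟩
    exact Set.countable_coe_iff.mp this
  -- the final countable infinite family
  set 𝒞 : Set (Set X) := M ∪ Set.range B with h𝒞
  have h𝒞c : 𝒞.Countable := hMc.union (countable_range B)
  have hBinj : Function.Injective B := by
    intro j k hjk
    by_contra hne'
    obtain ⟨x, hxb⟩ := (adm_props (hBadm j) hε).2.1
    exact Set.disjoint_left.mp (hdisj j k hne') hxb (show x ∈ B k from hjk ▸ hxb)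
  have h𝒞inf : 𝒞.Infinite :=
    Set.Infinite.mono subset_union_right (Set.infinite_range_of_injective hBinj)
  have h𝒞adm : ∀ V ∈ 𝒞, Adm U ε V := by
    rintro V (hVM | ⟨k, rfl⟩)
    · exact (hMadm V hVM).1
    · exact hBadm k
  have h𝒞pd : 𝒞.Pairwise Disjoint := by
    rintro V (hVM | ⟨j, rfl⟩) W (hWM | ⟨k, rfl⟩) hVW
    · exact hM.1.2 hVM hWM hVW
    · exact ((hMadm V hVM).2 k)
    · exact ((hMadm W hWM).2 j).symm
    · exact hdisj j k (fun h => hVW (by rw [h]))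
  haveI : Countable ↥𝒞 := Set.countable_coe_iff.mpr h𝒞c
  haveI : Infinite ↥𝒞 := Set.infinite_coe_iff.mpr h𝒞inf
  obtain ⟨den⟩ := nonempty_denumerable ↥𝒞
  set eqv : ↥𝒞 ≃ ℕ := Denumerable.eqv ↥𝒞 with heqv
  refine ⟨fun n => (eqv.symm n : Set X), ?_, ?_, ?_, ?_, ?_, ?_⟩
  · exact fun n => (adm_props (h𝒞adm _ (eqv.symm n).2) hε).1
  · exact fun n => (adm_props (h𝒞adm _ (eqv.symm n).2) hε).2.1
  · exact fun n => (adm_props (h𝒞adm _ (eqv.symm n).2) hε).2.2.1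
  · exact fun n => ⟨(adm_props (h𝒞adm _ (eqv.symm n).2) hε).2.2.2.1,
      (adm_props (h𝒞adm _ (eqv.symm n).2) hε).2.2.2.2⟩
  · intro m n hmn
    apply h𝒞pd (eqv.symm m).2 (eqv.symm n).2
    intro h
    exact hmn (eqv.symm.injective (Subtype.ext h))
  · intro x hx
    rw [_root_.mem_closure_iff]
    intro O hO hxO
    obtain ⟨a, haO, ha⟩ := hdense O hO ⟨x, hxO, hx⟩
    refine ⟨a, haO, ?_⟩
    rw [mem_iUnion]
    rcases ha with hB' | ⟨V, hVM, haV⟩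
    · obtain ⟨k, hk⟩ := mem_iUnion.mp hB'
      exact ⟨eqv ⟨B k, Or.inr ⟨k, rfl⟩⟩, by rw [heqv]; rw [Equiv.symm_apply_apply]; exact hk⟩
    · exact ⟨eqv ⟨V, Or.inl hVM⟩, by rw [heqv]; rw [Equiv.symm_apply_apply]; exact haV⟩

end Split





section Scheme
variable {X : Type*} [MetricSpace X] [TopologicalSpace.SeparableSpace X] [Nonempty X]
variable (hperf : Preperfect (univ : Set X))

def path (x : ℕ → ℕ) : ℕ → List ℕ
  | 0 => []
  | n+1 => x n :: path x n

@[simp] lemma path_length (x : ℕ → ℕ) : ∀ n, (path x n).length = n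
  | 0 => rfl
  | n+1 => by simp [path, path_length x n]

lemma path_eq_of_agree {x y : ℕ → ℕ} : ∀ n, (∀ i < n, x i = y i) → path x n = path y n
  | 0, _ => rfl
  | n+1, h => by
    simp only [path, List.cons.injEq]
    exact ⟨h n (Nat.lt_succ_self n),
      path_eq_of_agree n fun i hi => h i (hi.trans (Nat.lt_succ_self n))⟩

lemma agree_of_path_eq {x y : ℕ → ℕ} : ∀ n, path x n = path y n → ∀ i < n, x i = y i
  | 0, _, i, hi => absurd hi (Nat.not_lt_zero i)
  | n+1, h, i, hi => by
    simp only [path, List.cons.injEq] at h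
    rcases Nat.lt_succ_iff_lt_or_eq.mp hi with h' | h'
    · exact agree_of_path_eq n h.2 i h'
    · subst h'; exact h.1


include hperf

lemma splitF_aux (U : Set X) (ε : ℝ) :
    ∃ V : ℕ → Set X, (IsOpen U ∧ U.Nonempty ∧ 0 < ε) →
      ((∀ n, IsOpen (V n)) ∧ (∀ n, (V n).Nonempty) ∧ (∀ n, closure (V n) ⊆ U) ∧
       (∀ n, Bornology.IsBounded (V n) ∧ diam (V n) ≤ ε) ∧
       (∀ m n, m ≠ n → Disjoint (V m) (V n)) ∧ U ⊆ closure (⋃ n, V n)) := by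
  by_cases h : IsOpen U ∧ U.Nonempty ∧ 0 < ε
  · exact ⟨(split' hperf h.1 h.2.1 h.2.2).choose,
      fun _ => (split' hperf h.1 h.2.1 h.2.2).choose_spec⟩
  · exact ⟨fun _ => univ, fun hc => absurd hc h⟩

noncomputable def splitF (U : Set X) (ε : ℝ) : ℕ → Set X := (splitF_aux hperf U ε).choose

lemma splitF_spec {U : Set X} (hU : IsOpen U) (hne : U.Nonempty) {ε : ℝ} (hε : 0 < ε) :
    (∀ n, IsOpen (splitF hperf U ε n)) ∧ (∀ n, (splitF hperf U ε n).Nonempty) ∧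
      (∀ n, closure (splitF hperf U ε n) ⊆ U) ∧
      (∀ n, Bornology.IsBounded (splitF hperf U ε n) ∧ diam (splitF hperf U ε n) ≤ ε) ∧
      (∀ m n, m ≠ n → Disjoint (splitF hperf U ε m) (splitF hperf U ε n)) ∧
      U ⊆ closure (⋃ n, splitF hperf U ε n) :=
  (splitF_aux hperf U ε).choose_spec ⟨hU, hne, hε⟩

noncomputable def sch : List ℕ → Set X
  | [] => univ
  | n :: s => splitF hperf (sch s) ((1/2 : ℝ) ^ (s.length + 1)) n

lemma sch_isOpen_nonempty : ∀ s : List ℕ, IsOpen (sch hperf s) ∧ (sch hperf s).Nonempty := by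
  intro s
  induction s with
  | nil => exact ⟨isOpen_univ, univ_nonempty⟩
  | cons n s ih =>
    have hs := splitF_spec hperf ih.1 ih.2 (by positivity : (0:ℝ) < (1/2) ^ (s.length + 1))
    exact ⟨hs.1 n, hs.2.1 n⟩

lemma sch_spec (n : ℕ) (s : List ℕ) :
    closure (sch hperf (n :: s)) ⊆ sch hperf s ∧
    Bornology.IsBounded (sch hperf (n :: s)) ∧
    diam (sch hperf (n :: s)) ≤ (1/2 : ℝ) ^ (s.length + 1) ∧
    (∀ m, m ≠ n → Disjoint (sch hperf (m :: s)) (sch hperf (n :: s))) ∧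
    sch hperf s ⊆ closure (⋃ m, sch hperf (m :: s)) := by
  obtain ⟨ho, hne⟩ := sch_isOpen_nonempty hperf s
  have hs := splitF_spec hperf ho hne (by positivity : (0:ℝ) < (1/2) ^ (s.length + 1))
  exact ⟨hs.2.2.1 n, (hs.2.2.2.1 n).1, (hs.2.2.2.1 n).2,
    fun m hm => hs.2.2.2.2.1 m n hm, hs.2.2.2.2.2⟩

lemma sch_disj : ∀ s t : List ℕ, s.length = t.length → s ≠ t →
    Disjoint (sch hperf s) (sch hperf t) := by
  intro s
  induction s with
  | nil =>
    intro t hl hne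
    cases t with
    | nil => exact absurd rfl hne
    | cons b t => simp at hl
  | cons a s ih =>
    intro t hl hne
    cases t with
    | nil => simp at hl
    | cons b t =>
      by_cases hst : s = t
      · subst hst
        have hab : a ≠ b := fun h => hne (by rw [h])
        exact (sch_spec hperf b s).2.2.2.1 a hab
      · have hd : Disjoint (sch hperf s) (sch hperf t) := ih t (by simpa using hl) hst
        exact hd.mono (subset_closure.trans (sch_spec hperf a s).1)
          (subset_closure.trans (sch_spec hperf b t).1)

lemma sch_path_succ (x : ℕ → ℕ) (n : ℕ) :
    sch hperf (path x (n+1)) ⊆ sch hperf (path x n) :=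
  subset_closure.trans (sch_spec hperf (x n) (path x n)).1

lemma sch_path_anti (x : ℕ → ℕ) {m n : ℕ} (h : m ≤ n) :
    sch hperf (path x n) ⊆ sch hperf (path x m) := by
  induction h with
  | refl => exact subset_rfl
  | step h ih => exact (sch_path_succ hperf x _).trans ih

section Complete
variable [CompleteSpace X]

noncomputable def pt (x : ℕ → ℕ) (n : ℕ) : X :=
  (sch_isOpen_nonempty hperf (path x (n+1))).2.some

lemma pt_mem (x : ℕ → ℕ) (n : ℕ) : pt hperf x n ∈ sch hperf (path x (n+1)) :=
  (sch_isOpen_nonempty hperf (path x (n+1))).2.some_mem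

lemma pt_mem_le (x : ℕ → ℕ) {m n : ℕ} (h : m ≤ n) : pt hperf x n ∈ sch hperf (path x (m+1)) :=
  sch_path_anti hperf x (Nat.succ_le_succ h) (pt_mem hperf x n)

lemma dist_le_of_mem_path {x : ℕ → ℕ} {n : ℕ} {a b : X}
    (ha : a ∈ closure (sch hperf (path x (n+1)))) (hb : b ∈ closure (sch hperf (path x (n+1)))) :
    dist a b ≤ (1/2 : ℝ) ^ (n+1) := by
  have hsp := sch_spec hperf (x n) (path x n)
  have hbd : Bornology.IsBounded (closure (sch hperf (path x (n+1)))) := by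
    exact Bornology.IsBounded.closure hsp.2.1
  calc dist a b ≤ diam (closure (sch hperf (path x (n+1)))) :=
        Metric.dist_le_diam_of_mem hbd ha hb
    _ = diam (sch hperf (path x (n+1))) := Metric.diam_closure _
    _ ≤ (1/2 : ℝ) ^ (n+1) := by
        have := hsp.2.2.1
        simpa [path, path_length] using this

lemma pt_cauchy (x : ℕ → ℕ) : CauchySeq (pt hperf x) := by
  apply cauchySeq_of_le_geometric (1/2 : ℝ) 1 (by norm_num)
  intro n
  have h1 : pt hperf x n ∈ closure (sch hperf (path x (n+1))) := subset_closure (pt_mem hperf x n)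
  have h2 : pt hperf x (n+1) ∈ closure (sch hperf (path x (n+1))) :=
    subset_closure (pt_mem_le hperf x (Nat.le_succ n))
  have := dist_le_of_mem_path hperf h1 h2
  have hp : (0:ℝ) < (1/2) ^ n := by positivity
  calc dist (pt hperf x n) (pt hperf x (n+1)) ≤ (1/2 : ℝ)^(n+1) := this
    _ ≤ 1 * (1/2)^n := by rw [pow_succ]; nlinarith

noncomputable def emb (x : ℕ → ℕ) : X :=
  (cauchySeq_tendsto_of_complete (pt_cauchy hperf x)).choose

lemma emb_tendsto (x : ℕ → ℕ) : Tendsto (pt hperf x) atTop (𝓝 (emb hperf x)) :=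
  (cauchySeq_tendsto_of_complete (pt_cauchy hperf x)).choose_spec

lemma emb_mem_closure (x : ℕ → ℕ) (n : ℕ) :
    emb hperf x ∈ closure (sch hperf (path x (n+1))) := by
  apply mem_closure_of_tendsto (emb_tendsto hperf x)
  filter_upwards [eventually_ge_atTop n] with m hm
  exact pt_mem_le hperf x hm

lemma emb_mem (x : ℕ → ℕ) (n : ℕ) : emb hperf x ∈ sch hperf (path x n) :=
  (sch_spec hperf (x n) (path x n)).1 (emb_mem_closure hperf x n)

lemma emb_dist {x y : ℕ → ℕ} {n : ℕ} (h : path x (n+1) = path y (n+1)) :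
    dist (emb hperf x) (emb hperf y) ≤ (1/2 : ℝ) ^ (n+1) := by
  apply dist_le_of_mem_path hperf (emb_mem_closure hperf x n)
  rw [h]
  exact emb_mem_closure hperf y n

lemma emb_continuous : Continuous (emb hperf) := by
  rw [continuous_iff_continuousAt]
  intro x
  rw [ContinuousAt, Metric.tendsto_nhds]
  intro ε hε
  obtain ⟨n, hn⟩ := exists_pow_lt_of_lt_one hε (by norm_num : (1/2:ℝ) < 1)
  have hSeq : {y : ℕ → ℕ | ∀ i < n + 1, y i = x i} =
      ⋂ i ∈ Finset.range (n+1), (fun y : ℕ → ℕ => y i) ⁻¹' {x i} := by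
    ext y; simp [Finset.mem_range]
  have hS : IsOpen {y : ℕ → ℕ | ∀ i < n + 1, y i = x i} := by
    rw [hSeq]
    exact isOpen_biInter_finset fun i _ => (continuous_apply i).isOpen_preimage _ (isOpen_discrete _)
  filter_upwards [hS.mem_nhds (by simp : x ∈ {y : ℕ → ℕ | ∀ i < n + 1, y i = x i})] with y hy
  have hpath : path y (n+1) = path x (n+1) := path_eq_of_agree (n+1) hy
  have h1 : dist (emb hperf y) (emb hperf x) ≤ (1/2:ℝ)^(n+1) := emb_dist hperf hpath
  have hp : (0:ℝ) < (1/2) ^ n := by positivity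
  calc dist (emb hperf y) (emb hperf x) ≤ (1/2:ℝ)^(n+1) := h1
    _ < ε := by rw [pow_succ]; nlinarith

lemma path_eq_of_mem {x y : ℕ → ℕ} {n : ℕ} (h : emb hperf y ∈ sch hperf (path x n)) :
    path y n = path x n := by
  by_contra hne
  exact Set.disjoint_left.mp
    (sch_disj hperf (path y n) (path x n) (by simp [path_length]) hne)
    (emb_mem hperf y n) h

lemma emb_inj : Function.Injective (emb hperf) := by
  intro x y hxy
  funext i
  have hmem : emb hperf y ∈ sch hperf (path x (i+1)) := by
    rw [← hxy]; exact emb_mem hperf x (i+1)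
  exact (agree_of_path_eq (i+1) (path_eq_of_mem hperf hmem) i (Nat.lt_succ_self i)).symm

lemma emb_isEmbedding : Topology.IsEmbedding (emb hperf) := by
  refine ⟨isInducing_iff_nhds.mpr fun x => le_antisymm
    (tendsto_iff_comap.mp (emb_continuous hperf).continuousAt) ?_, emb_inj hperf⟩
  intro S hS
  rw [nhds_pi, Filter.mem_pi] at hS
  obtain ⟨I, hIfin, t, ht, hsub⟩ := hS
  obtain ⟨N, hN⟩ := hIfin.bddAbove
  refine mem_comap.mpr ⟨sch hperf (path x (N+1)),
    ((sch_isOpen_nonempty hperf _).1).mem_nhds (emb_mem hperf x (N+1)), ?_⟩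
  intro y hy
  apply hsub
  rw [Set.mem_pi]
  intro i hiI
  have hagree : y i = x i := agree_of_path_eq (N+1) (path_eq_of_mem hperf hy) i
    (Nat.lt_succ_of_le (hN hiI))
  rw [hagree]
  exact mem_of_mem_nhds (ht i)

noncomputable def lvl (n : ℕ) : Set X := ⋃ s ∈ {l : List ℕ | l.length = n}, sch hperf s

lemma lvl_open (n : ℕ) : IsOpen (lvl hperf n) :=
  isOpen_biUnion fun s _ => (sch_isOpen_nonempty hperf s).1

lemma lvl_dense (n : ℕ) : Dense (lvl hperf n) := by
  induction n with
  | zero =>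
    have : (univ : Set X) ⊆ lvl hperf 0 :=
      subset_biUnion_of_mem (u := fun s => sch hperf s) (show ([] : List ℕ) ∈ {l : List ℕ | l.length = 0} from rfl)
    exact dense_univ.mono this
  | succ n ih =>
    rw [dense_iff_inter_open]
    intro O hO hOne
    obtain ⟨q, hqO, hql⟩ := (dense_iff_inter_open.mp ih) O hO hOne
    obtain ⟨s, hs, hqs⟩ := Set.mem_iUnion₂.mp hql
    have hOs : IsOpen (O ∩ sch hperf s) := hO.inter (sch_isOpen_nonempty hperf s).1
    have hqmem : q ∈ closure (⋃ m, sch hperf (m :: s)) := by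
      rcases s with _ | ⟨a, s'⟩
      · exact (sch_spec hperf 0 []).2.2.2.2 hqs
      · exact (sch_spec hperf 0 (a :: s')).2.2.2.2 hqs
    obtain ⟨z, ⟨hzO, hzs⟩, hzU⟩ := _root_.mem_closure_iff.mp hqmem (O ∩ sch hperf s) hOs ⟨hqO, hqs⟩
    obtain ⟨m, hm⟩ := Set.mem_iUnion.mp hzU
    refine ⟨z, hzO, ?_⟩
    exact Set.mem_iUnion₂.mpr ⟨m :: s, by simp [show s.length = n from hs], hm⟩

lemma emb_mem_lvl (x : ℕ → ℕ) (n : ℕ) : emb hperf x ∈ lvl hperf n :=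
  Set.mem_iUnion₂.mpr ⟨path x n, by simp [path_length], emb_mem hperf x n⟩

lemma G_subset_range : (⋂ n, lvl hperf n) ⊆ Set.range (emb hperf) := by
  intro p hp
  have hex : ∀ n, ∃ s : List ℕ, s.length = n ∧ p ∈ sch hperf s := by
    intro n
    obtain ⟨s, hs, hps⟩ := Set.mem_iUnion₂.mp (mem_iInter.mp hp n)
    exact ⟨s, hs, hps⟩
  choose S hS1 hS2 using hex
  have huniq : ∀ (n : ℕ) (s : List ℕ), s.length = n → p ∈ sch hperf s → s = S n := by
    intro n s hl hm
    by_contra hne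
    exact Set.disjoint_left.mp (sch_disj hperf s (S n) (by rw [hl, hS1]) hne) hm (hS2 n)
  set x : ℕ → ℕ := fun n => (S (n+1)).headI with hx
  have hpath : ∀ n, path x n = S n := by
    intro n
    induction n with
    | zero => exact (List.length_eq_zero_iff.mp (hS1 0)).symm
    | succ n ih =>
      have hnil : S (n+1) ≠ [] := by
        intro hc
        have := hS1 (n+1); rw [hc] at this; simp at this
      obtain ⟨a, tl, hat⟩ := List.exists_cons_of_ne_nil hnil
      have htl : tl = S n := by
        apply huniq
        · have := hS1 (n+1); rw [hat] at this; simpa using this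
        · have hmem := hS2 (n+1)
          rw [hat] at hmem
          exact (sch_spec hperf a tl).1 (subset_closure hmem)
      show x n :: path x n = S (n+1)
      rw [ih, hx]
      simp only []
      rw [hat, htl]
      simp [List.headI]
  have hmem : ∀ n, p ∈ sch hperf (path x n) := fun n => (hpath n).symm ▸ hS2 n
  refine ⟨x, ?_⟩
  have hd : ∀ n : ℕ, dist (emb hperf x) p ≤ (1/2:ℝ)^(n+1) := fun n =>
    dist_le_of_mem_path hperf (emb_mem_closure hperf x n) (subset_closure (hmem (n+1)))
  have htend : Tendsto (fun n : ℕ => (1/2:ℝ)^(n+1)) atTop (𝓝 0) := by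
    have h0 : Tendsto (fun n : ℕ => (1/2:ℝ)^n) atTop (𝓝 0) :=
      tendsto_pow_atTop_nhds_zero_of_lt_one (by norm_num) (by norm_num)
    exact h0.comp (tendsto_add_atTop_nat 1)
  have : dist (emb hperf x) p ≤ 0 := ge_of_tendsto htend (Filter.Eventually.of_forall hd)
  exact dist_le_zero.mp this

lemma nwd_isMeagre {s : Set X} (h : IsNowhereDense s) : IsMeagre s :=
  isMeagre_iff_countable_union_isNowhereDense.mpr
    ⟨{s}, by simp [h], countable_singleton _, by simp⟩

lemma range_compl_meagre : IsMeagre (Set.range (emb hperf))ᶜ := by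
  have hsub : (Set.range (emb hperf))ᶜ ⊆ ⋃ n, (lvl hperf n)ᶜ := by
    rw [← compl_iInter, compl_subset_compl]
    exact G_subset_range hperf
  refine IsMeagre.mono hsub (isMeagre_iUnion fun n => ?_)
  apply nwd_isMeagre hperf
  rw [IsClosed.isNowhereDense_iff (isClosed_compl_iff.mpr (lvl_open hperf n))]
  rw [interior_compl, (lvl_dense hperf n).closure_eq, compl_univ]

lemma emb_denseRange : DenseRange (emb hperf) := by
  have hG : Dense (⋂ n, lvl hperf n) :=
    dense_iInter_of_isOpen (fun n => lvl_open hperf n) (fun n => lvl_dense hperf n)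
  exact hG.mono (G_subset_range hperf)

end Complete
end Scheme

theorem exists_baire_embedding {X : Type*} [MetricSpace X] [CompleteSpace X]
    [TopologicalSpace.SeparableSpace X] [Nonempty X] (hperf : Preperfect (univ : Set X)) :
    ∃ e : (ℕ → ℕ) → X, Topology.IsEmbedding e ∧ DenseRange e ∧ IsMeagre (Set.range e)ᶜ :=
  ⟨emb hperf, emb_isEmbedding hperf, emb_denseRange hperf, range_compl_meagre hperf⟩


theorem transfer_perfect {X : Type*} [TopologicalSpace X] [T1Space X] (h : PerfectProp (ℕ → ℕ))
    (e : (ℕ → ℕ) → X) (he : Topology.IsEmbedding e) (hdr : DenseRange e)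
    (hm : IsMeagre (Set.range e)ᶜ) : PerfectProp X := by
  intro A hA
  set B : Set (ℕ → ℕ) := e ⁻¹' A with hB
  have hunion : ∀ {s t : Set X}, IsMeagre s → IsMeagre t → IsMeagre (s ∪ t) := by
    intro s t hs ht
    rw [IsMeagre, Set.compl_union]
    exact Filter.inter_mem hs ht
  have hBnm : ¬ IsMeagre B := by
    intro hBm
    have himg : IsMeagre (e '' B) := meagre_image he hdr hBm
    rw [hB, Set.image_preimage_eq_inter_range] at himg
    have hsubA : A ⊆ (A ∩ Set.range e) ∪ (Set.range e)ᶜ := by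
      intro a ha
      by_cases hr : a ∈ Set.range e
      · exact Or.inl ⟨ha, hr⟩
      · exact Or.inr hr
    exact hA ((hunion himg hm).mono hsubA)
  obtain ⟨Q, hQnwd, hQperf, hQne, hQtr⟩ := h B hBnm
  refine ⟨closure (e '' Q), (nwd_image he hdr hQnwd).closure, ?_, hQne.image e |>.closure, ?_⟩
  · apply Preperfect.perfect_closure
    rintro - ⟨q, hq, rfl⟩
    rw [accPt_iff_nhds]
    intro U hU
    obtain ⟨y', ⟨hy'U, hy'Q⟩, hy'ne⟩ := (accPt_iff_nhds (x := q) (C := Q)).mp (hQperf.acc q hq) (e ⁻¹' U)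
      (he.continuous.continuousAt.preimage_mem_nhds hU)
    exact ⟨e y', ⟨hy'U, ⟨y', hy'Q, rfl⟩⟩, fun hc => hy'ne (he.injective hc)⟩
  · intro hme
    have hjm : ∀ q : Q, e (q : ℕ → ℕ) ∈ closure (e '' Q) :=
      fun q => subset_closure ⟨q.1, q.2, rfl⟩
    set j : Q → (closure (e '' Q) : Set X) := fun q => ⟨e q, hjm q⟩ with hj
    have hjemb : Topology.IsEmbedding j :=
      (he.comp Topology.IsEmbedding.subtypeVal).codRestrict _ _
    have hjdr : DenseRange j := by
      intro z
      rw [closure_subtype]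
      have himg : (Subtype.val '' Set.range j : Set X) = e '' Q := by
        ext w
        constructor
        · rintro ⟨-, ⟨q, rfl⟩, rfl⟩; exact ⟨q.1, q.2, rfl⟩
        · rintro ⟨v, hv, rfl⟩; exact ⟨j ⟨v, hv⟩, ⟨⟨v, hv⟩, rfl⟩, rfl⟩
      rw [himg]
      exact z.2
    have hpre : IsMeagre (j ⁻¹' ((↑) ⁻¹' A : Set (closure (e '' Q)))) :=
      meagre_preimage hjemb hjdr hme
    have heq : (j ⁻¹' ((↑) ⁻¹' A : Set (closure (e '' Q)))) = ((↑) ⁻¹' B : Set Q) := rfl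
    rw [heq] at hpre
    exact hQtr hpre

theorem stmt_9 (h : PerfectProp (ℕ → ℕ)) (X : Type*) [TopologicalSpace X]
    [PolishSpace X] [Nonempty X] (hperf : Preperfect (Set.univ : Set X)) :
    PerfectProp X := by
  letI := TopologicalSpace.upgradeIsCompletelyMetrizable X
  obtain ⟨e, he, hdr, hm⟩ := exists_baire_embedding hperf
  exact transfer_perfect h e he hdr hm
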